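/- Suppose λ ≥ ‖(2/n)·Xᵀε‖⋆. Then the regularized least-squares minimizer β̂ satisfies the prediction error bound (1/n)·‖X(β⋆ − β̂)‖₂² ≤ 3λ·‖β⋆‖. -/

import Mathlib

open Metric Set

noncomputable section

/-- Euclidean space `ℝ^p`. -/
abbrev E (p : ℕ) := EuclideanSpace ℝ (Fin p)

/-- Matrix-vector multiplication, valued in Euclidean space. -/
def mulVecE {n p : ℕ} (X : Matrix (Fin n) (Fin p) ℝ) (v : E p) : E n :=
  WithLp.toLp 2 (X.mulVec v)

/-- The dual norm of a norm `N` on `ℝ^p`: `‖θ‖⋆ = sup {⟨θ, β⟩ : N β ≤ 1}`. -/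
def dualOf {p : ℕ} (N : E p → ℝ) (θ : E p) : ℝ :=
  sSup ((fun β => (inner ℝ θ β : ℝ)) '' {β | N β ≤ 1})

/-- A bundle of a norm on `E p` with its axioms. -/
structure GoodNorm (p : ℕ) where
  N : E p → ℝ
  triangle : ∀ x y : E p, N (x + y) ≤ N x + N y
  smul : ∀ (a : ℝ) (x : E p), N (a • x) = |a| * N x
  definite : ∀ x : E p, N x = 0 → x = 0

/-- Type synonym for `E p` equipped with the norm `P.N`. -/
def WithNorm {p : ℕ} (_P : GoodNorm p) : Type := E p

instance {p : ℕ} (P : GoodNorm p) : AddCommGroup (WithNorm P) :=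
  inferInstanceAs (AddCommGroup (E p))

instance {p : ℕ} (P : GoodNorm p) : NormedAddCommGroup (WithNorm P) :=
  AddGroupNorm.toNormedAddCommGroup
    { toFun := P.N
      map_zero' := by have h := P.smul 0 0; simp only [abs_zero, zero_mul, zero_smul] at h; exact h
      add_le' := P.triangle
      neg' := fun x => by have h := P.smul (-1) (show E p from x); rw [abs_neg, abs_one, one_mul, neg_one_smul] at h; exact h
      eq_zero_of_map_eq_zero' := fun x h => P.definite x h }

instance {p : ℕ} (P : GoodNorm p) : Module ℝ (WithNorm P) :=
  inferInstanceAs (Module ℝ (E p))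

instance {p : ℕ} (P : GoodNorm p) : NormedSpace ℝ (WithNorm P) where
  norm_smul_le a x := le_of_eq (P.smul a x)

instance {p : ℕ} (P : GoodNorm p) : FiniteDimensional ℝ (WithNorm P) :=
  inferInstanceAs (FiniteDimensional ℝ (E p))

lemma GoodNorm.norm_eq {p : ℕ} (P : GoodNorm p) (x : WithNorm P) : ‖x‖ = P.N x := rfl

lemma GoodNorm.nonneg {p : ℕ} (P : GoodNorm p) (x : E p) : 0 ≤ P.N x :=
  norm_nonneg (show WithNorm P from x)

/-- The Euclidean norm is bounded by a constant multiple of `P.N`. -/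
lemma GoodNorm.exists_bound {p : ℕ} (P : GoodNorm p) :
    ∃ C : ℝ, 0 < C ∧ ∀ x : E p, ‖x‖ ≤ C * P.N x := by
  let f : WithNorm P →ₗ[ℝ] E p :=
    { toFun := fun x => x
      map_add' := fun _ _ => rfl
      map_smul' := fun _ _ => rfl }
  let g : WithNorm P →L[ℝ] E p := LinearMap.toContinuousLinearMap f
  refine ⟨‖g‖ + 1, by positivity, fun x => ?_⟩
  calc ‖x‖ = ‖g (show WithNorm P from x)‖ := rfl
    _ ≤ (‖g‖ + 1) * ‖(show WithNorm P from x)‖ := le_trans (g.le_opNorm _)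
        (mul_le_mul_of_nonneg_right (by linarith) (norm_nonneg _))
    _ = (‖g‖ + 1) * P.N x := rfl

lemma GoodNorm.inner_le_dual {p : ℕ} (P : GoodNorm p) (θ β : E p) :
    (inner ℝ θ β : ℝ) ≤ dualOf P.N θ * P.N β := by
  obtain ⟨C, hC, hB⟩ := P.exists_bound
  have hbdd : BddAbove ((fun β => (inner ℝ θ β : ℝ)) '' {β | P.N β ≤ 1}) := by
    refine ⟨‖θ‖ * C, ?_⟩
    rintro s ⟨v, hv, rfl⟩
    calc (inner ℝ θ v : ℝ) ≤ ‖θ‖ * ‖v‖ := real_inner_le_norm θ v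
      _ ≤ ‖θ‖ * (C * P.N v) := by
          exact mul_le_mul_of_nonneg_left (hB v) (norm_nonneg θ)
      _ ≤ ‖θ‖ * (C * 1) := by
          have : C * P.N v ≤ C * 1 := mul_le_mul_of_nonneg_left hv hC.le
          exact mul_le_mul_of_nonneg_left this (norm_nonneg θ)
      _ = ‖θ‖ * C := by ring
  rcases eq_or_lt_of_le (P.nonneg β) with h0 | h0
  · have hβ : β = 0 := P.definite β h0.symm
    have hN0 : P.N (0 : E p) = 0 := by simpa using P.smul 0 0
    simp [hβ, hN0]
  · set u : E p := (P.N β)⁻¹ • β with hu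
    have hNu : P.N u = 1 := by
      rw [hu, P.smul, abs_of_pos (inv_pos.mpr h0), inv_mul_cancel₀ h0.ne']
    have hmem : (inner ℝ θ u : ℝ) ∈ ((fun β => (inner ℝ θ β : ℝ)) '' {β | P.N β ≤ 1}) :=
      ⟨u, by simp [hNu], rfl⟩
    have hle : (inner ℝ θ u : ℝ) ≤ dualOf P.N θ := le_csSup hbdd hmem
    have hinner : (inner ℝ θ u : ℝ) = (P.N β)⁻¹ * inner ℝ θ β := by
      rw [hu, real_inner_smul_right]
    have : (inner ℝ θ β : ℝ) = P.N β * inner ℝ θ u := by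
      rw [hinner]; field_simp
    rw [this, mul_comm (dualOf P.N θ) (P.N β)]
    exact mul_le_mul_of_nonneg_left hle h0.le

lemma mulVecE_sub {n p : ℕ} (X : Matrix (Fin n) (Fin p) ℝ) (a b : E p) :
    mulVecE X (a - b) = mulVecE X a - mulVecE X b := by
  ext i
  simp [mulVecE, Matrix.mulVec, dotProduct, mul_sub, Finset.sum_sub_distrib]

lemma inner_mulVecE {n p : ℕ} (X : Matrix (Fin n) (Fin p) ℝ) (v : E p) (w : E n) :
    (inner ℝ (mulVecE X v) w : ℝ) = inner ℝ v (mulVecE X.transpose w) := by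
  simp only [mulVecE, PiLp.inner_apply, RCLike.inner_apply, starRingEnd_apply, star_trivial]
  have : ∑ i, w i * (X.mulVec v) i = dotProduct w (X.mulVec v) := rfl
  rw [this]
  have : ∑ i, (X.transpose.mulVec w) i * v i = dotProduct (X.transpose.mulVec w) v := rfl
  rw [this]
  rw [Matrix.dotProduct_mulVec, Matrix.mulVec_transpose]

/-- if `λ ≥ ‖(2/n)·Xᵀε‖⋆`, the regularized least-squares minimizer `β̂`
satisfies the prediction error bound `(1/n)·‖X(β⋆ − β̂)‖₂² ≤ 3λ·‖β⋆‖`. -/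
theorem prediction_error (n p : ℕ) (hn : 1 ≤ n) (hp : 1 ≤ p)
    (X : Matrix (Fin n) (Fin p) ℝ) (βstar : E p) (ε : E n)
    (N : E p → ℝ)
    (Ntriangle : ∀ x y : E p, N (x + y) ≤ N x + N y)
    (Nsmul : ∀ (a : ℝ) (x : E p), N (a • x) = |a| * N x)
    (Ndefinite : ∀ x : E p, N x = 0 → x = 0)
    (lam : ℝ) (hlam0 : 0 < lam)
    (y : E n) (hy : y = mulVecE X βstar + ε)
    (βhat : E p)
    (hmin : ∀ β : E p,
      (1 / (2 * n) : ℝ) * ‖y - mulVecE X βhat‖ ^ 2 + lam * N βhat ≤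
        (1 / (2 * n) : ℝ) * ‖y - mulVecE X β‖ ^ 2 + lam * N β)
    (hlam : lam ≥ dualOf N (((2 : ℝ) / n) • mulVecE X.transpose ε)) :
    (1 / n : ℝ) * ‖mulVecE X (βstar - βhat)‖ ^ 2 ≤ 3 * lam * N βstar := by
  set P : GoodNorm p := ⟨N, Ntriangle, Nsmul, Ndefinite⟩ with hP
  have hnpos : (0 : ℝ) < n := by exact_mod_cast hn
  set Δ : E p := βstar - βhat with hΔ
  set v : E n := mulVecE X Δ with hv
  set θ : E p := ((2 : ℝ) / n) • mulVecE X.transpose ε with hθ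
  -- residual identities
  have hres2 : y - mulVecE X βstar = ε := by rw [hy]; abel
  have hres1 : y - mulVecE X βhat = v + ε := by
    rw [hy, hv, hΔ, mulVecE_sub]; abel
  -- key inner ℝ product identity
  have hI : (inner ℝ v ε : ℝ) = inner ℝ Δ (mulVecE X.transpose ε) := inner_mulVecE X Δ ε
  -- expand the basic inequality
  have hbasic := hmin βstar
  rw [hres1, hres2, norm_add_sq_real] at hbasic
  -- dual norm control of the cross term
  have hdual : (inner ℝ θ (βhat - βstar) : ℝ) ≤ lam * N (βhat - βstar) := by
    have h1 : (inner ℝ θ (βhat - βstar) : ℝ) ≤ dualOf P.N θ * P.N (βhat - βstar) :=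
      P.inner_le_dual θ (βhat - βstar)
    have h2 : dualOf P.N θ * P.N (βhat - βstar) ≤ lam * P.N (βhat - βstar) :=
      mul_le_mul_of_nonneg_right hlam (P.nonneg _)
    exact h1.trans h2
  have hθinner : (inner ℝ θ (βhat - βstar) : ℝ) = -((2 : ℝ) / n) * inner ℝ Δ (mulVecE X.transpose ε) := by
    rw [hθ, real_inner_smul_left]
    have : (inner ℝ (mulVecE X.transpose ε) (βhat - βstar) : ℝ)
        = - inner ℝ Δ (mulVecE X.transpose ε) := by
      rw [real_inner_comm, hΔ, ← inner_neg_left]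
      congr 1
      abel
    rw [this]; ring
  -- norm bound on N (βhat - βstar)
  have hNN : N (βhat - βstar) ≤ N βhat + N βstar := by
    have h1 : N (βhat + (-1 : ℝ) • βstar) ≤ N βhat + N ((-1 : ℝ) • βstar) :=
      Ntriangle βhat ((-1 : ℝ) • βstar)
    have h2 : ((-1 : ℝ) • βstar : E p) = -βstar := by
      simp
    rw [h2] at h1
    have h3 : N (-βstar) = N βstar := by
      have := Nsmul (-1) βstar
      simpa using this
    have h4 : (βhat - βstar : E p) = βhat + -βstar := by abel
    rw [h4]
    rw [h3] at h1
    exact h1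
  have hNhat : 0 ≤ N βhat := P.nonneg βhat
  have hNstar : 0 ≤ N βstar := P.nonneg βstar
  -- combine
  have hkey : -((2 : ℝ) / n) * inner ℝ Δ (mulVecE X.transpose ε) ≤ lam * (N βhat + N βstar) := by
    calc -((2 : ℝ) / n) * (inner ℝ Δ (mulVecE X.transpose ε) : ℝ)
        = inner ℝ θ (βhat - βstar) := hθinner.symm
      _ ≤ lam * N (βhat - βstar) := hdual
      _ ≤ lam * (N βhat + N βstar) := mul_le_mul_of_nonneg_left hNN hlam0.le
  have hsq : (0 : ℝ) ≤ ‖v‖ ^ 2 := sq_nonneg _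
  set I : ℝ := inner ℝ Δ (mulVecE X.transpose ε) with hIdef
  rw [hI] at hbasic
  have h2n : (0 : ℝ) < 2 * n := by linarith
  have hc1 : (1 / (2 * (n : ℝ))) * (‖v‖ ^ 2 + 2 * I) ≤ lam * N βstar - lam * N βhat := by
    have expand : (1 / (2 * (n : ℝ))) * (‖v‖ ^ 2 + 2 * I + ‖ε‖ ^ 2)
        = (1 / (2 * (n : ℝ))) * (‖v‖ ^ 2 + 2 * I) + (1 / (2 * (n : ℝ))) * ‖ε‖ ^ 2 := by ring
    rw [expand] at hbasic
    linarith
  have hb2 : ‖v‖ ^ 2 + 2 * I ≤ 2 * n * (lam * N βstar - lam * N βhat) := by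
    calc ‖v‖ ^ 2 + 2 * I = 2 * n * ((1 / (2 * (n : ℝ))) * (‖v‖ ^ 2 + 2 * I)) := by
          field_simp
      _ ≤ 2 * n * (lam * N βstar - lam * N βhat) :=
          mul_le_mul_of_nonneg_left hc1 h2n.le
  have hk2 : -2 * I ≤ n * (lam * (N βhat + N βstar)) := by
    calc -2 * I = n * (-((2 : ℝ) / n) * I) := by field_simp
      _ ≤ n * (lam * (N βhat + N βstar)) :=
          mul_le_mul_of_nonneg_left hkey hnpos.le
  have hfin : ‖v‖ ^ 2 ≤ 3 * lam * N βstar * n := by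
    nlinarith [mul_nonneg (mul_nonneg hnpos.le hlam0.le) hNhat]
  rw [div_mul_eq_mul_div, div_le_iff₀ hnpos, one_mul]
  exact hfin

end
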